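/- For every b > 0, the set ∪_{m=1}^∞ ∪_{n=1}^∞ E_{b/m, n} is of first Baire category (meagre) in the metric space (F, d). -/

import Mathlib

noncomputable section

abbrev Vc : Type := EuclideanSpace ℂ (Fin 2)

/-- Euclidean norm of a lattice point `k ∈ ℤ²`. -/
def knorm (k : ℤ × ℤ) : ℝ := Real.sqrt ((k.1 : ℝ) ^ 2 + (k.2 : ℝ) ^ 2)

/-- The reality condition `û(-k) = conj (û(k))`. -/
def IsRealCond (u : ℤ × ℤ → Vc) : Prop :=
  ∀ k : ℤ × ℤ, ∀ i : Fin 2, u (-k) i = starRingEnd ℂ (u k i)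

/-- Divergence-free condition `k ⬝ û(k) = 0`. -/
def DivFree (u : ℤ × ℤ → Vc) : Prop :=
  ∀ k : ℤ × ℤ, (k.1 : ℂ) * u k 0 + (k.2 : ℂ) * u k 1 = 0

/-- Membership in the Fourier model of the phase space `H`. -/
def InH (u : ℤ × ℤ → Vc) : Prop := u 0 = 0 ∧ IsRealCond u ∧ DivFree u

/-- `|A^{α/2} u|²  =  L² Σ_{k≠0} (κ₀|k|)^{2α} |û(k)|²` for natural `α`. -/
def sqA (L κ₀ : ℝ) (u : ℤ × ℤ → Vc) (α : ℕ) : ℝ :=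
  L ^ 2 * ∑' k : ℤ × ℤ, (κ₀ * knorm k) ^ (2 * α) * ‖u k‖ ^ 2

/-- Finiteness of `|A^{α/2}u|` for natural `α`. -/
def SummableA (κ₀ : ℝ) (u : ℤ × ℤ → Vc) (α : ℕ) : Prop :=
  Summable fun k : ℤ × ℤ => (κ₀ * knorm k) ^ (2 * α) * ‖u k‖ ^ 2

/-- The class `C(σ)`. -/
def InC (L κ₀ ν σ : ℝ) (u : ℤ × ℤ → Vc) : Prop :=
  (∀ α : ℕ, SummableA κ₀ u α) ∧
  ∃ c₀ : ℝ, ∀ α : ℕ,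
    sqA L κ₀ u α ≤ c₀ * Real.exp (σ * (α : ℝ) ^ 2) * ν ^ 2 * κ₀ ^ (2 * α)

/-- The summand of `|u|_b²`. -/
def ebTerm (b : ℝ) (u : ℤ × ℤ → Vc) (k : ℤ × ℤ) : ℝ :=
  Real.exp (2 * b * (Real.log (knorm k + Real.exp 1)) ^ 2) * ‖u k‖ ^ 2

/-- `|u|_b² = L² Σ_{k≠0} e^{2b(ln(|k|+e))²} |û(k)|²`. -/
def ebSq (L b : ℝ) (u : ℤ × ℤ → Vc) : ℝ := L ^ 2 * ∑' k : ℤ × ℤ, ebTerm b u k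

/-- The Fourier model of `F = C^∞ ∩ H`: elements of `H` with `|A^{α/2}u| < ∞`
for every `α ∈ ℕ`. -/
def Fs (L κ₀ : ℝ) : Type := {u : ℤ × ℤ → Vc // InH u ∧ ∀ α : ℕ, SummableA κ₀ u α}

/-- `|A^{α/2} w| = (L² Σ_{k≠0} (κ₀|k|)^{2α} |ŵ(k)|²)^{1/2}`. -/
def nA (L κ₀ : ℝ) (w : ℤ × ℤ → Vc) (α : ℕ) : ℝ := Real.sqrt (sqA L κ₀ w α)

/-- The Fréchet metric
`d(u,v) = Σ_{α=1}^∞ 2^{-α} |A^{α/2}(u-v)| / (1 + |A^{α/2}(u-v)|)`. -/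
def dF (L κ₀ : ℝ) (u v : Fs L κ₀) : ℝ :=
  ∑' α : ℕ, (1 / 2 ^ (α + 1)) *
    (nA L κ₀ (fun k => u.1 k - v.1 k) (α + 1) /
      (1 + nA L κ₀ (fun k => u.1 k - v.1 k) (α + 1)))

/-- The topology on `(F, d)` generated by the open balls of the metric `d`. -/
noncomputable instance topF (L κ₀ : ℝ) : TopologicalSpace (Fs L κ₀) :=
  TopologicalSpace.generateFrom
    {B | ∃ x : Fs L κ₀, ∃ r : ℝ, B = {y : Fs L κ₀ | dF L κ₀ x y < r}}

/-- The set `E_{b,n} = {u ∈ E_b : |u|_b ≤ n}`, viewed as a subset of `F`. -/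
def EbnSet (L κ₀ b : ℝ) (n : ℕ) : Set (Fs L κ₀) :=
  {u : Fs L κ₀ | Summable (ebTerm b u.1) ∧
    Real.sqrt (L ^ 2 * ∑' k : ℤ × ℤ, ebTerm b u.1 k) ≤ n}



lemma knorm_nonneg (k : ℤ × ℤ) : 0 ≤ knorm k := Real.sqrt_nonneg _

lemma weight_nonneg (κ₀ : ℝ) (k : ℤ × ℤ) (α : ℕ) : 0 ≤ (κ₀ * knorm k) ^ (2 * α) := by
  rw [mul_comm 2 α, pow_mul]
  positivity

lemma summable_weight_bound {W : ℤ × ℤ → ℝ} (hW : ∀ k, 0 ≤ W k) {f g h : ℤ × ℤ → Vc}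
    (hb : ∀ k, ‖h k‖ ≤ ‖f k‖ + ‖g k‖)
    (hf : Summable fun k => W k * ‖f k‖ ^ 2) (hg : Summable fun k => W k * ‖g k‖ ^ 2) :
    Summable fun k => W k * ‖h k‖ ^ 2 := by
  refine Summable.of_nonneg_of_le (fun k => by have := hW k; positivity) (fun k => ?_)
    ((hf.mul_left 2).add (hg.mul_left 2))
  have h1 := hb k
  have h2 : ‖h k‖ ^ 2 ≤ 2 * ‖f k‖ ^ 2 + 2 * ‖g k‖ ^ 2 := by
    have h0 : ‖h k‖ ^ 2 ≤ (‖f k‖ + ‖g k‖) ^ 2 := by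
      apply pow_le_pow_left₀ (norm_nonneg _) h1
    nlinarith [sq_nonneg (‖f k‖ - ‖g k‖)]
  calc W k * ‖h k‖ ^ 2 ≤ W k * (2 * ‖f k‖ ^ 2 + 2 * ‖g k‖ ^ 2) :=
        mul_le_mul_of_nonneg_left h2 (hW k)
    _ = 2 * (W k * ‖f k‖ ^ 2) + 2 * (W k * ‖g k‖ ^ 2) := by ring

lemma SummableA.sub' {κ₀ : ℝ} {u v : ℤ × ℤ → Vc} {α : ℕ}
    (hu : SummableA κ₀ u α) (hv : SummableA κ₀ v α) :
    SummableA κ₀ (fun k => u k - v k) α :=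
  summable_weight_bound (fun k => weight_nonneg κ₀ k α) (fun k => norm_sub_le _ _) hu hv

lemma nA_add_le (L κ₀ : ℝ) (hL : 0 ≤ L) (f g : ℤ × ℤ → Vc) (α : ℕ)
    (hf : SummableA κ₀ f α) (hg : SummableA κ₀ g α) :
    nA L κ₀ (fun k => f k + g k) α ≤ nA L κ₀ f α + nA L κ₀ g α := by
  set wgt : ℤ × ℤ → ℝ := fun k => (κ₀ * knorm k) ^ α with hwgt
  have key : ∀ (u : ℤ × ℤ → Vc) (k : ℤ × ℤ),
      ‖wgt k • u k‖ ^ 2 = (κ₀ * knorm k) ^ (2 * α) * ‖u k‖ ^ 2 := by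
    intro u k
    rw [norm_smul, mul_pow, Real.norm_eq_abs, sq_abs, mul_comm 2 α, pow_mul]
  have hrpow : ∀ y : ℝ, y ^ ((2 : ENNReal).toReal) = y ^ 2 := by
    intro y
    rw [show ((2 : ENNReal).toReal) = ((2 : ℕ) : ℝ) by norm_num, Real.rpow_natCast]
  have hmem : ∀ (u : ℤ × ℤ → Vc), SummableA κ₀ u α →
      Memℓp (fun k => wgt k • u k) 2 := by
    intro u hu
    apply memℓp_gen
    refine (hu.congr ?_)
    intro k
    rw [hrpow, key]
  have hnorm : ∀ (X : lp (fun _ : ℤ × ℤ => Vc) 2) (u : ℤ × ℤ → Vc),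
      (∀ k, ‖X k‖ ^ 2 = (κ₀ * knorm k) ^ (2 * α) * ‖u k‖ ^ 2) →
      nA L κ₀ u α = L * ‖X‖ := by
    intro X u hX
    have h2 : ‖X‖ ^ 2 = ∑' k, ‖X k‖ ^ 2 := by
      have := lp.norm_rpow_eq_tsum (p := 2) (by norm_num) X
      rw [hrpow] at this
      rw [this]
      exact tsum_congr fun k => hrpow _
    have : sqA L κ₀ u α = (L * ‖X‖) ^ 2 := by
      rw [sqA, mul_pow, h2]
      congr 1
      exact (tsum_congr fun k => (hX k).symm)
    rw [nA, this, Real.sqrt_sq (by positivity)]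
  set F : lp (fun _ : ℤ × ℤ => Vc) 2 := ⟨fun k => wgt k • f k, hmem f hf⟩ with hF
  set G : lp (fun _ : ℤ × ℤ => Vc) 2 := ⟨fun k => wgt k • g k, hmem g hg⟩ with hG
  have hFapp : ∀ k, F k = wgt k • f k := fun k => rfl
  have hGapp : ∀ k, G k = wgt k • g k := fun k => rfl
  have hFGapp : ∀ k, (F + G) k = wgt k • (f k + g k) := by
    intro k
    rw [lp.coeFn_add, Pi.add_apply, hFapp, hGapp, smul_add]
  have e1 : nA L κ₀ (fun k => f k + g k) α = L * ‖F + G‖ :=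
    hnorm (F + G) _ (fun k => by rw [hFGapp]; exact key (fun j => f j + g j) k)
  have e2 : nA L κ₀ f α = L * ‖F‖ := hnorm F f (fun k => by rw [hFapp]; exact key f k)
  have e3 : nA L κ₀ g α = L * ‖G‖ := hnorm G g (fun k => by rw [hGapp]; exact key g k)
  rw [e1, e2, e3, ← mul_add]
  exact mul_le_mul_of_nonneg_left (norm_add_le F G) hL

lemma nA_nonneg (L κ₀ : ℝ) (w : ℤ × ℤ → Vc) (α : ℕ) : 0 ≤ nA L κ₀ w α :=
  Real.sqrt_nonneg _

lemma phi_nonneg {x : ℝ} (hx : 0 ≤ x) : 0 ≤ x / (1 + x) :=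
  div_nonneg hx (by linarith)

lemma phi_le_one {x : ℝ} (hx : 0 ≤ x) : x / (1 + x) ≤ 1 := by
  rw [div_le_one (by linarith)]; linarith

lemma phi_le_self {x : ℝ} (hx : 0 ≤ x) : x / (1 + x) ≤ x :=
  div_le_self hx (by linarith)

lemma phi_mono {x y : ℝ} (hx : 0 ≤ x) (hxy : x ≤ y) : x / (1 + x) ≤ y / (1 + y) := by
  rw [div_le_div_iff₀ (by linarith) (by linarith)]
  nlinarith

lemma phi_subadd {x y : ℝ} (hx : 0 ≤ x) (hy : 0 ≤ y) :
    (x + y) / (1 + (x + y)) ≤ x / (1 + x) + y / (1 + y) := by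
  rw [div_add_div _ _ (by positivity : (1:ℝ) + x ≠ 0) (by positivity : (1:ℝ) + y ≠ 0),
    div_le_div_iff₀ (by positivity) (by positivity)]
  nlinarith [mul_nonneg (mul_nonneg hx hy) (add_nonneg hx hy), mul_nonneg hx hy]

lemma summable_dF_series (L κ₀ : ℝ) (w : ℤ × ℤ → Vc) :
    Summable (fun α : ℕ => (1 / 2 ^ (α + 1) : ℝ) *
      (nA L κ₀ w (α + 1) / (1 + nA L κ₀ w (α + 1)))) := by
  refine Summable.of_nonneg_of_le (fun α => ?_) (fun α => ?_)
    ((summable_nat_add_iff 1).mpr summable_geometric_two)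
  · have := nA_nonneg L κ₀ w (α + 1)
    positivity
  · have h1 := nA_nonneg L κ₀ w (α + 1)
    have h2 := phi_le_one h1
    have h3 := phi_nonneg h1
    calc (1 / 2 ^ (α + 1) : ℝ) * (nA L κ₀ w (α + 1) / (1 + nA L κ₀ w (α + 1)))
        ≤ (1 / 2 ^ (α + 1) : ℝ) * 1 := by
          apply mul_le_mul_of_nonneg_left h2 (by positivity)
      _ = (1 / 2 : ℝ) ^ (α + 1) := by rw [mul_one, one_div, one_div, inv_pow]

lemma dF_self (L κ₀ : ℝ) (u : Fs L κ₀) : dF L κ₀ u u = 0 := by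
  have h : ∀ β : ℕ, nA L κ₀ (fun _ : ℤ × ℤ => (0 : Vc)) β = 0 := by
    intro β
    simp [nA, sqA]
  simp [dF, sub_self, h]

lemma dF_nonneg (L κ₀ : ℝ) (u v : Fs L κ₀) : 0 ≤ dF L κ₀ u v := by
  apply tsum_nonneg
  intro α
  have := nA_nonneg L κ₀ (fun k => u.1 k - v.1 k) (α + 1)
  positivity

lemma dF_triangle (L κ₀ : ℝ) (hL : 0 ≤ L) (u v w : Fs L κ₀) :
    dF L κ₀ u w ≤ dF L κ₀ u v + dF L κ₀ v w := by
  rw [dF, dF, dF, ← Summable.tsum_add (summable_dF_series L κ₀ _) (summable_dF_series L κ₀ _)]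
  apply Summable.tsum_le_tsum _ (summable_dF_series L κ₀ _)
    ((summable_dF_series L κ₀ _).add (summable_dF_series L κ₀ _))
  intro α
  set a := nA L κ₀ (fun k => u.1 k - v.1 k) (α + 1) with ha
  set b := nA L κ₀ (fun k => v.1 k - w.1 k) (α + 1) with hb
  set c := nA L κ₀ (fun k => u.1 k - w.1 k) (α + 1) with hc
  have ha0 : 0 ≤ a := nA_nonneg _ _ _ _
  have hb0 : 0 ≤ b := nA_nonneg _ _ _ _
  have hc0 : 0 ≤ c := nA_nonneg _ _ _ _
  have hcab : c ≤ a + b := by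
    rw [hc, show (fun k => u.1 k - w.1 k) =
      (fun k => (u.1 k - v.1 k) + (v.1 k - w.1 k)) from funext fun k => by abel]
    exact nA_add_le L κ₀ hL _ _ (α + 1)
      (SummableA.sub' (u.2.2 _) (v.2.2 _)) (SummableA.sub' (v.2.2 _) (w.2.2 _))
  have key : c / (1 + c) ≤ a / (1 + a) + b / (1 + b) :=
    le_trans (phi_mono hc0 hcab) (phi_subadd ha0 hb0)
  calc (1 / 2 ^ (α + 1) : ℝ) * (c / (1 + c))
      ≤ (1 / 2 ^ (α + 1) : ℝ) * (a / (1 + a) + b / (1 + b)) :=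
        mul_le_mul_of_nonneg_left key (by positivity)
    _ = (1 / 2 ^ (α + 1) : ℝ) * (a / (1 + a)) + (1 / 2 ^ (α + 1) : ℝ) * (b / (1 + b)) := by
        ring

lemma isOpen_ball (L κ₀ : ℝ) (x : Fs L κ₀) (r : ℝ) :
    IsOpen {y : Fs L κ₀ | dF L κ₀ x y < r} :=
  TopologicalSpace.isOpen_generateFrom_of_mem ⟨x, r, rfl⟩

lemma exists_ball_subset (L κ₀ : ℝ) (hL : 0 ≤ L) :
    ∀ U : Set (Fs L κ₀), IsOpen U → ∀ u ∈ U,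
      ∃ δ, 0 < δ ∧ ∀ y, dF L κ₀ u y < δ → y ∈ U := by
  intro U hU
  have hU' : TopologicalSpace.GenerateOpen
      {B | ∃ x : Fs L κ₀, ∃ r : ℝ, B = {y : Fs L κ₀ | dF L κ₀ x y < r}} U := hU
  clear hU
  induction hU' with
  | basic V hV =>
    obtain ⟨x, r, rfl⟩ := hV
    intro u hu
    simp only [Set.mem_setOf_eq] at hu
    refine ⟨r - dF L κ₀ x u, by linarith, fun y hy => ?_⟩
    have := dF_triangle L κ₀ hL x u y
    simp only [Set.mem_setOf_eq]
    linarith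
  | univ => exact fun u _ => ⟨1, one_pos, fun y _ => trivial⟩
  | inter V W _ _ ihV ihW =>
    intro u hu
    obtain ⟨δ1, h1, hb1⟩ := ihV u hu.1
    obtain ⟨δ2, h2, hb2⟩ := ihW u hu.2
    exact ⟨min δ1 δ2, lt_min h1 h2, fun y hy =>
      ⟨hb1 y (hy.trans_le (min_le_left _ _)), hb2 y (hy.trans_le (min_le_right _ _))⟩⟩
  | sUnion S hS ih =>
    intro u hu
    obtain ⟨V, hVS, huV⟩ := hu
    obtain ⟨δ, hδ, hb⟩ := ih V hVS u huV
    exact ⟨δ, hδ, fun y hy => ⟨V, hVS, hb y hy⟩⟩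

lemma dF_ge_first (L κ₀ : ℝ) (u v : Fs L κ₀) :
    (1 / 2 : ℝ) * (nA L κ₀ (fun k => u.1 k - v.1 k) 1 /
      (1 + nA L κ₀ (fun k => u.1 k - v.1 k) 1)) ≤ dF L κ₀ u v := by
  have h := Summable.le_tsum (summable_dF_series L κ₀ (fun k => u.1 k - v.1 k)) 0
    (fun j _ => by have := nA_nonneg L κ₀ (fun k => u.1 k - v.1 k) (j + 1); positivity)
  rw [dF]
  simpa using h

lemma dF_le_of (L κ₀ : ℝ) (u v : Fs L κ₀) (N : ℕ) (X : ℝ) (hX : 0 ≤ X)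
    (hhead : ∀ α : ℕ, α < N → nA L κ₀ (fun k => u.1 k - v.1 k) (α + 1) ≤ X) :
    dF L κ₀ u v ≤ N * X + (1 / 2 : ℝ) ^ N := by
  set f : ℕ → ℝ := fun α => (1 / 2 ^ (α + 1) : ℝ) *
    (nA L κ₀ (fun k => u.1 k - v.1 k) (α + 1) /
      (1 + nA L κ₀ (fun k => u.1 k - v.1 k) (α + 1))) with hf
  have hsum := summable_dF_series L κ₀ (fun k => u.1 k - v.1 k)
  have hsplit : (∑ α ∈ Finset.range N, f α) + ∑' α, f (α + N) = ∑' α, f α :=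
    Summable.sum_add_tsum_nat_add N hsum
  have head : ∑ α ∈ Finset.range N, f α ≤ N * X := by
    have hb : ∀ α ∈ Finset.range N, f α ≤ X := by
      intro α hα
      rw [Finset.mem_range] at hα
      have h1 := nA_nonneg L κ₀ (fun k => u.1 k - v.1 k) (α + 1)
      calc f α ≤ 1 * (nA L κ₀ (fun k => u.1 k - v.1 k) (α + 1) /
            (1 + nA L κ₀ (fun k => u.1 k - v.1 k) (α + 1))) := by
            apply mul_le_mul_of_nonneg_right _ (phi_nonneg h1)
            rw [div_le_one (by positivity)]
            exact one_le_pow₀ (by norm_num)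
        _ ≤ nA L κ₀ (fun k => u.1 k - v.1 k) (α + 1) := by
            rw [one_mul]; exact phi_le_self h1
        _ ≤ X := hhead α hα
    calc ∑ α ∈ Finset.range N, f α ≤ Finset.card (Finset.range N) • X :=
          Finset.sum_le_card_nsmul _ _ _ hb
      _ = N * X := by rw [Finset.card_range, nsmul_eq_mul]
  have tail : ∑' α, f (α + N) ≤ (1 / 2 : ℝ) ^ N := by
    have hb : ∀ α : ℕ, f (α + N) ≤ (1 / 2 : ℝ) ^ (α + (N + 1)) := by
      intro α
      have h1 := nA_nonneg L κ₀ (fun k => u.1 k - v.1 k) (α + N + 1)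
      calc f (α + N) ≤ (1 / 2 ^ (α + N + 1) : ℝ) * 1 :=
            mul_le_mul_of_nonneg_left (phi_le_one h1) (by positivity)
        _ = (1 / 2 : ℝ) ^ (α + (N + 1)) := by
            rw [mul_one, one_div, one_div, inv_pow, add_assoc]
    calc ∑' α, f (α + N) ≤ ∑' α : ℕ, (1 / 2 : ℝ) ^ (α + (N + 1)) :=
          Summable.tsum_le_tsum hb ((summable_nat_add_iff N).mpr hsum)
            ((summable_nat_add_iff (N + 1)).mpr summable_geometric_two)
      _ = (1 / 2 : ℝ) ^ N := by
          have : ∀ α : ℕ, (1 / 2 : ℝ) ^ (α + (N + 1)) = (1 / 2 : ℝ) ^ α * (1 / 2 : ℝ) ^ (N + 1) :=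
            fun α => pow_add _ _ _
          rw [tsum_congr this, tsum_mul_right, tsum_geometric_two]
          rw [pow_succ]
          ring
  calc dF L κ₀ u v = (∑ α ∈ Finset.range N, f α) + ∑' α, f (α + N) := hsplit.symm
    _ ≤ N * X + (1 / 2 : ℝ) ^ N := add_le_add head tail

lemma ebnset_coeff {L κ₀ : ℝ} (hL : 0 < L) {b' : ℝ} {n : ℕ} {v : Fs L κ₀}
    (hv : v ∈ EbnSet L κ₀ b' n) (k : ℤ × ℤ) :
    ‖v.1 k‖ ≤ ((n : ℝ) / L) * Real.exp (-(b' * (Real.log (knorm k + Real.exp 1)) ^ 2)) := by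
  obtain ⟨hsum, hle⟩ := hv
  set y := Real.log (knorm k + Real.exp 1) with hy
  have hT : 0 ≤ ∑' j, ebTerm b' v.1 j :=
    tsum_nonneg (fun j => by unfold ebTerm; positivity)
  have h1 : L ^ 2 * ∑' j, ebTerm b' v.1 j ≤ (n : ℝ) ^ 2 := by
    have h0 : (0:ℝ) ≤ L ^ 2 * ∑' j, ebTerm b' v.1 j := by positivity
    have := Real.sq_sqrt h0
    nlinarith [Real.sqrt_nonneg (L ^ 2 * ∑' j, ebTerm b' v.1 j)]
  have h2 : ebTerm b' v.1 k ≤ (n : ℝ) ^ 2 / L ^ 2 := by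
    have h3 : ebTerm b' v.1 k ≤ ∑' j, ebTerm b' v.1 j :=
      Summable.le_tsum hsum k (fun j _ => by unfold ebTerm; positivity)
    rw [le_div_iff₀ (by positivity)]
    nlinarith
  have he : Real.exp (2 * b' * y ^ 2) * ‖v.1 k‖ ^ 2 ≤ (n : ℝ) ^ 2 / L ^ 2 := h2
  have hkey : ‖v.1 k‖ ^ 2 ≤ (((n : ℝ) / L) * Real.exp (-(b' * y ^ 2))) ^ 2 := by
    calc ‖v.1 k‖ ^ 2
        = Real.exp (-(2 * b' * y ^ 2)) * (Real.exp (2 * b' * y ^ 2) * ‖v.1 k‖ ^ 2) := by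
          rw [← mul_assoc, ← Real.exp_add]; simp
      _ ≤ Real.exp (-(2 * b' * y ^ 2)) * ((n : ℝ) ^ 2 / L ^ 2) :=
          mul_le_mul_of_nonneg_left he (Real.exp_pos _).le
      _ = (((n : ℝ) / L) * Real.exp (-(b' * y ^ 2))) ^ 2 := by
          rw [mul_pow, div_pow, sq (Real.exp (-(b' * y ^ 2))), ← Real.exp_add]
          ring_nf
  have h4 : (0:ℝ) ≤ ((n : ℝ) / L) * Real.exp (-(b' * y ^ 2)) := by positivity
  calc ‖v.1 k‖ = Real.sqrt (‖v.1 k‖ ^ 2) := (Real.sqrt_sq (norm_nonneg _)).symm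
    _ ≤ Real.sqrt ((((n : ℝ) / L) * Real.exp (-(b' * y ^ 2))) ^ 2) := Real.sqrt_le_sqrt hkey
    _ = ((n : ℝ) / L) * Real.exp (-(b' * y ^ 2)) := Real.sqrt_sq h4

def pert (j : ℕ) (t : ℝ) : ℤ × ℤ → Vc := fun k =>
  if k = ((j : ℤ), 0) ∨ k = (-(j : ℤ), 0) then EuclideanSpace.single 1 (t : ℂ) else 0

lemma knorm_pos_of_nat (j : ℕ) : knorm ((j : ℤ), 0) = (j : ℝ) := by
  rw [knorm]
  push_cast
  simp [Real.sqrt_sq (Nat.cast_nonneg j)]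

lemma knorm_neg_of_nat (j : ℕ) : knorm (-(j : ℤ), 0) = (j : ℝ) := by
  rw [knorm]
  push_cast
  simp [Real.sqrt_sq (Nat.cast_nonneg j)]

lemma norm_pert_single (t : ℝ) (ht : 0 ≤ t) : ‖EuclideanSpace.single (1 : Fin 2) (t : ℂ)‖ = t := by
  rw [EuclideanSpace.norm_single, Complex.norm_real, Real.norm_eq_abs, abs_of_nonneg ht]

lemma pert_zero_off {j : ℕ} (t : ℝ) {k : ℤ × ℤ}
    (hk : ¬(k = ((j : ℤ), 0) ∨ k = (-(j : ℤ), 0))) : pert j t k = 0 := by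
  rw [pert, if_neg hk]

lemma pert_summable (j : ℕ) (t : ℝ) (κ₀ : ℝ) (α : ℕ) : SummableA κ₀ (pert j t) α := by
  apply summable_of_ne_finset_zero (s := {((j : ℤ), 0), (-(j : ℤ), 0)})
  intro k hk
  have : pert j t k = 0 := by
    apply pert_zero_off
    simpa using hk
  rw [this]
  simp

lemma sqA_pert (L κ₀ : ℝ) {j : ℕ} (hj : 1 ≤ j) (t : ℝ) (ht : 0 ≤ t) (α : ℕ) :
    sqA L κ₀ (pert j t) α =
      L ^ 2 * ((κ₀ * (j : ℝ)) ^ (2 * α) * t ^ 2 + (κ₀ * (j : ℝ)) ^ (2 * α) * t ^ 2) := by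
  rw [sqA]
  congr 1
  rw [tsum_eq_sum (s := {((j : ℤ), 0), (-(j : ℤ), 0)})
    (fun k hk => by rw [pert_zero_off t (by simpa using hk)]; simp)]
  have hne : ((j : ℤ), 0) ≠ (-(j : ℤ), 0) := by
    intro h
    have := congrArg Prod.fst h
    simp at this
    omega
  rw [Finset.sum_insert (by simpa using hne), Finset.sum_singleton]
  rw [show pert j t ((j : ℤ), 0) = EuclideanSpace.single 1 (t : ℂ) from if_pos (Or.inl rfl),
    show pert j t (-(j : ℤ), 0) = EuclideanSpace.single 1 (t : ℂ) from if_pos (Or.inr rfl),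
    norm_pert_single t ht, knorm_pos_of_nat, knorm_neg_of_nat]

lemma nA_pert_le (L κ₀ : ℝ) (hL : 0 ≤ L) (hκ : 0 ≤ κ₀) {j : ℕ} (hj : 1 ≤ j)
    (t : ℝ) (ht : 0 ≤ t) (α : ℕ) :
    nA L κ₀ (pert j t) α ≤ Real.sqrt 2 * L * (κ₀ * (j : ℝ)) ^ α * t := by
  rw [nA, sqA_pert L κ₀ hj t ht α]
  have h2 : (Real.sqrt 2 * L * (κ₀ * (j : ℝ)) ^ α * t) ^ 2 =
      L ^ 2 * ((κ₀ * (j : ℝ)) ^ (2 * α) * t ^ 2 + (κ₀ * (j : ℝ)) ^ (2 * α) * t ^ 2) := by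
    rw [mul_pow, mul_pow, mul_pow, Real.sq_sqrt (by norm_num : (0:ℝ) ≤ 2),
      mul_comm 2 α, pow_mul]
    ring
  rw [← h2, Real.sqrt_sq (by positivity)]

lemma nA_single_ge (L κ₀ : ℝ) (hL : 0 ≤ L) (hκ : 0 ≤ κ₀) (w : ℤ × ℤ → Vc)
    (hw : SummableA κ₀ w 1) (k0 : ℤ × ℤ) :
    L * ((κ₀ * knorm k0) * ‖w k0‖) ≤ nA L κ₀ w 1 := by
  have h1 : (κ₀ * knorm k0) ^ (2 * 1) * ‖w k0‖ ^ 2 ≤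
      ∑' k, (κ₀ * knorm k) ^ (2 * 1) * ‖w k‖ ^ 2 :=
    Summable.le_tsum hw k0 (fun j _ => by
      have := weight_nonneg κ₀ j 1
      positivity)
  have h0 : 0 ≤ κ₀ * knorm k0 := mul_nonneg hκ (knorm_nonneg k0)
  have h2 : (L * ((κ₀ * knorm k0) * ‖w k0‖)) ^ 2 ≤ sqA L κ₀ w 1 := by
    rw [sqA]
    calc (L * ((κ₀ * knorm k0) * ‖w k0‖)) ^ 2
        = L ^ 2 * ((κ₀ * knorm k0) ^ (2 * 1) * ‖w k0‖ ^ 2) := by ring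
      _ ≤ L ^ 2 * ∑' k, (κ₀ * knorm k) ^ (2 * 1) * ‖w k‖ ^ 2 :=
          mul_le_mul_of_nonneg_left h1 (by positivity)
  calc L * ((κ₀ * knorm k0) * ‖w k0‖)
      = Real.sqrt ((L * ((κ₀ * knorm k0) * ‖w k0‖)) ^ 2) :=
        (Real.sqrt_sq (by positivity)).symm
    _ ≤ nA L κ₀ w 1 := Real.sqrt_le_sqrt h2

lemma pert_inH {j : ℕ} (hj : 1 ≤ j) (t : ℝ) {v : ℤ × ℤ → Vc} (hv : InH v) :
    InH (fun k => v k + pert j t k) := by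
  obtain ⟨h0, hreal, hdiv⟩ := hv
  refine ⟨?_, ?_, ?_⟩
  · have hp : pert j t 0 = 0 := by
      apply pert_zero_off
      rintro (h | h) <;>
        · have := congrArg Prod.fst h
          simp at this
          omega
    show v 0 + pert j t 0 = 0
    rw [h0, hp, add_zero]
  · intro k i
    show v (-k) i + pert j t (-k) i = starRingEnd ℂ (v k i + pert j t k i)
    rw [map_add, hreal k i]
    congr 1
    have hiff : (-k = ((j : ℤ), 0) ∨ -k = (-(j : ℤ), 0)) ↔
        (k = ((j : ℤ), 0) ∨ k = (-(j : ℤ), 0)) := by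
      constructor
      · rintro (h | h)
        · right
          rw [← neg_neg k, h]
          simp
        · left
          rw [← neg_neg k, h]
          simp
      · rintro (rfl | rfl)
        · right
          simp
        · left
          simp
    by_cases hk : k = ((j : ℤ), 0) ∨ k = (-(j : ℤ), 0)
    · rw [pert, if_pos (hiff.mpr hk), pert, if_pos hk]
      by_cases hi : i = 1
      · subst hi
        simp [EuclideanSpace.single_apply, Complex.conj_ofReal]
      · simp [EuclideanSpace.single_apply, hi]
    · rw [pert_zero_off t (fun h => hk (hiff.mp h)), pert_zero_off t hk]
      simp
  · intro k
    show (k.1 : ℂ) * (v k + pert j t k) 0 + (k.2 : ℂ) * (v k + pert j t k) 1 = 0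
    have hadd0 : (v k + pert j t k) 0 = v k 0 + pert j t k 0 := rfl
    have hadd1 : (v k + pert j t k) 1 = v k 1 + pert j t k 1 := rfl
    by_cases hk : k = ((j : ℤ), 0) ∨ k = (-(j : ℤ), 0)
    · have hk2 : k.2 = 0 := by rcases hk with rfl | rfl <;> rfl
      have hp : pert j t k = EuclideanSpace.single 1 (t : ℂ) := if_pos hk
      have hp0 : pert j t k 0 = 0 := by
        rw [hp, EuclideanSpace.single_apply]
        simp
      rw [hadd0, hadd1, hp0, hk2]
      have := hdiv k
      rw [hk2] at this
      push_cast at this ⊢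
      ring_nf
      ring_nf at this
      linear_combination this
    · have hp : pert j t k = 0 := pert_zero_off t hk
      have hp0 : pert j t k 0 = 0 := by rw [hp]; rfl
      have hp1 : pert j t k 1 = 0 := by rw [hp]; rfl
      rw [hadd0, hadd1, hp0, hp1, add_zero, add_zero]
      exact hdiv k

lemma exists_good_j (κ₀ : ℝ) (hκ : 0 < κ₀) {b' : ℝ} (hb' : 0 < b') (C : ℝ) (hC : 0 ≤ C)
    (N : ℕ) {ε : ℝ} (hε : 0 < ε) :
    ∃ j : ℕ, 1 ≤ j ∧
      C * ((1 + κ₀) * ((j : ℝ) + Real.exp 1)) ^ N *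
        Real.exp (-(b' * (Real.log ((j : ℝ) + Real.exp 1)) ^ 2)) < ε := by
  set M : ℝ := ((N : ℝ) + 1) / b' with hM
  set K : ℝ := C * (1 + κ₀) ^ N with hK
  have hK0 : 0 ≤ K := by positivity
  refine ⟨max 1 (max ⌈Real.exp M⌉₊ (⌈K / ε⌉₊ + 1)), le_max_left _ _, ?_⟩
  set j : ℕ := max 1 (max ⌈Real.exp M⌉₊ (⌈K / ε⌉₊ + 1)) with hjdef
  have hj1 : (1 : ℝ) ≤ (j : ℝ) := by
    have : 1 ≤ j := le_max_left _ _
    exact_mod_cast this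
  have hje : Real.exp M ≤ (j : ℝ) := by
    refine le_trans (Nat.le_ceil _) ?_
    have : ⌈Real.exp M⌉₊ ≤ j := le_trans (le_max_left _ _) (le_max_right 1 _)
    exact_mod_cast this
  have hjK : K / ε < (j : ℝ) := by
    have h1 : K / ε ≤ (⌈K / ε⌉₊ : ℝ) := Nat.le_ceil _
    have h2 : (⌈K / ε⌉₊ : ℝ) < (⌈K / ε⌉₊ : ℝ) + 1 := by linarith
    have h3 : ((⌈K / ε⌉₊ + 1 : ℕ) : ℝ) ≤ (j : ℝ) := by
      have : ⌈K / ε⌉₊ + 1 ≤ j := le_trans (le_max_right _ _) (le_max_right 1 _)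
      exact_mod_cast this
    push_cast at h3
    linarith
  set x : ℝ := (j : ℝ) + Real.exp 1 with hx
  have hex : (1 : ℝ) ≤ Real.exp 1 := by
    have := Real.add_one_le_exp 1
    linarith
  have hx1 : 1 ≤ x := by rw [hx]; linarith
  have hxpos : 0 < x := by linarith
  set y : ℝ := Real.log x with hy
  have hy0 : 0 ≤ y := Real.log_nonneg hx1
  have hyM : M ≤ y := by
    have h1 : Real.exp M ≤ x := by rw [hx]; linarith [Real.exp_pos 1]
    calc M = Real.log (Real.exp M) := (Real.log_exp M).symm
      _ ≤ y := Real.log_le_log (Real.exp_pos M) h1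
  have key : Real.exp (-(b' * y ^ 2)) ≤ (x ^ (N + 1))⁻¹ := by
    have h1 : ((N : ℝ) + 1) * y ≤ b' * y ^ 2 := by
      have h2 : b' * M ≤ b' * y := mul_le_mul_of_nonneg_left hyM hb'.le
      have h3 : b' * M = (N : ℝ) + 1 := by
        rw [hM]
        field_simp
      calc ((N : ℝ) + 1) * y = (b' * M) * y := by rw [h3]
        _ ≤ (b' * y) * y := mul_le_mul_of_nonneg_right h2 hy0
        _ = b' * y ^ 2 := by ring
    calc Real.exp (-(b' * y ^ 2)) ≤ Real.exp (-(((N : ℝ) + 1) * y)) :=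
          Real.exp_le_exp.mpr (by linarith)
      _ = (x ^ (N + 1))⁻¹ := by
          rw [Real.exp_neg]
          congr 1
          rw [show ((N : ℝ) + 1) = ((N + 1 : ℕ) : ℝ) by push_cast; ring,
            Real.exp_nat_mul, Real.exp_log hxpos]
  have hxN0 : (0:ℝ) < x ^ N := by positivity
  calc C * ((1 + κ₀) * x) ^ N * Real.exp (-(b' * y ^ 2))
      ≤ C * ((1 + κ₀) * x) ^ N * (x ^ (N + 1))⁻¹ := by
        apply mul_le_mul_of_nonneg_left key (by positivity)
    _ = K / x := by
        rw [mul_pow, hK]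
        rw [pow_succ]
        field_simp
    _ ≤ K / (j : ℝ) := by
        apply div_le_div_of_nonneg_left hK0 (by linarith) ?_
        · rw [hx]; linarith [Real.exp_pos 1]
    _ < ε := by
        rw [div_lt_iff₀ (by linarith : (0:ℝ) < (j : ℝ))]
        have := (div_lt_iff₀ hε).mp hjK
        linarith [mul_comm ε (j : ℝ)]

lemma nA_congr (L κ₀ : ℝ) {f g : ℤ × ℤ → Vc} (h : ∀ k, ‖f k‖ = ‖g k‖) (α : ℕ) :
    nA L κ₀ f α = nA L κ₀ g α := by
  rw [nA, nA, sqA, sqA]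
  congr 2
  exact tsum_congr fun k => by rw [h k]

lemma ebn_nowhereDense (L κ₀ : ℝ) (hL : 0 < L) (hκ : 0 < κ₀) (b' : ℝ) (hb' : 0 < b')
    (n : ℕ) : IsNowhereDense (EbnSet L κ₀ b' n) := by
  set S := EbnSet L κ₀ b' n with hSdef
  rw [IsNowhereDense, Set.eq_empty_iff_forall_notMem]
  intro u hu
  have hL0 : (0:ℝ) ≤ L := hL.le
  obtain ⟨δ, hδ, hball⟩ :=
    exists_ball_subset L κ₀ hL0 (interior (closure S)) isOpen_interior u hu
  have hucl : u ∈ closure S := interior_subset hu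
  obtain ⟨v, hvball, hvS⟩ := mem_closure_iff.mp hucl {y | dF L κ₀ u y < δ/4}
    (isOpen_ball L κ₀ u (δ/4)) (by simp only [Set.mem_setOf_eq, dF_self]; linarith)
  simp only [Set.mem_setOf_eq] at hvball
  obtain ⟨N, hN⟩ := exists_pow_lt_of_lt_one (show (0:ℝ) < δ/8 by linarith)
    (by norm_num : (1:ℝ)/2 < 1)
  set C : ℝ := (N : ℝ) * (Real.sqrt 2 * L * (2*(n:ℝ)/L + 1)) with hC
  have hC0 : 0 ≤ C := by positivity
  obtain ⟨j, hj1, hjlt⟩ := exists_good_j κ₀ hκ hb' C hC0 N (show (0:ℝ) < δ/8 by linarith)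
  set c : ℝ := Real.exp (-(b' * (Real.log ((j:ℝ) + Real.exp 1))^2)) with hc
  have hc0 : 0 < c := Real.exp_pos _
  set t : ℝ := (2*(n:ℝ)/L + 1) * c with ht
  have ht0 : 0 < t := by positivity
  set w : Fs L κ₀ := ⟨fun k => v.1 k + pert j t k,
    ⟨pert_inH hj1 t v.2.1,
      fun α => summable_weight_bound (fun k => weight_nonneg κ₀ k α)
        (fun k => norm_add_le _ _) (v.2.2 α) (pert_summable j t κ₀ α)⟩⟩ with hw
  have hdiffnorm : ∀ k, ‖v.1 k - w.1 k‖ = ‖pert j t k‖ := by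
    intro k
    show ‖v.1 k - (v.1 k + pert j t k)‖ = _
    rw [sub_add_cancel_left, norm_neg]
  have hnAvw : ∀ β, nA L κ₀ (fun k => v.1 k - w.1 k) β = nA L κ₀ (pert j t) β :=
    fun β => nA_congr L κ₀ (fun k => hdiffnorm k) β
  set X : ℝ := Real.sqrt 2 * L * ((1+κ₀) * ((j:ℝ)+Real.exp 1))^N * t with hX
  have hX0 : 0 ≤ X := by positivity
  have hhead : ∀ α : ℕ, α < N → nA L κ₀ (fun k => v.1 k - w.1 k) (α+1) ≤ X := by
    intro α hα
    rw [hnAvw]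
    refine le_trans (nA_pert_le L κ₀ hL0 hκ.le hj1 t ht0.le (α+1)) ?_
    rw [hX]
    have hj1' : (1:ℝ) ≤ (j:ℝ) := by exact_mod_cast hj1
    have h1 : (κ₀*(j:ℝ))^(α+1) ≤ ((1+κ₀)*((j:ℝ)+Real.exp 1))^N := by
      have hbase0 : 0 ≤ κ₀*(j:ℝ) := by positivity
      have hbig : (1:ℝ) ≤ (1+κ₀)*((j:ℝ)+Real.exp 1) := by
        nlinarith [Real.exp_pos 1, hκ.le]
      have hle : κ₀*(j:ℝ) ≤ (1+κ₀)*((j:ℝ)+Real.exp 1) := by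
        nlinarith [Real.exp_pos 1]
      calc (κ₀*(j:ℝ))^(α+1) ≤ ((1+κ₀)*((j:ℝ)+Real.exp 1))^(α+1) :=
            pow_le_pow_left₀ hbase0 hle _
        _ ≤ ((1+κ₀)*((j:ℝ)+Real.exp 1))^N := pow_le_pow_right₀ hbig (by omega)
    exact mul_le_mul_of_nonneg_right
      (mul_le_mul_of_nonneg_left h1 (by positivity : (0:ℝ) ≤ Real.sqrt 2 * L)) ht0.le
  have hdvw : dF L κ₀ v w < δ/4 := by
    refine lt_of_le_of_lt (dF_le_of L κ₀ v w N X hX0 hhead) ?_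
    have hNX : (N:ℝ) * X < δ/8 := by
      have hrw : (N:ℝ) * X = C * ((1+κ₀)*((j:ℝ)+Real.exp 1))^N * c := by
        rw [hX, hC, ht]; ring
      rw [hrw]; exact hjlt
    linarith [hN]
  have hw_in : w ∈ closure S := by
    have h1 : dF L κ₀ u w < δ := by
      have := dF_triangle L κ₀ hL0 u v w
      linarith
    exact interior_subset (hball w h1)
  set kj : ℤ × ℤ := ((j:ℤ), 0) with hkj
  have hknj : knorm kj = (j:ℝ) := knorm_pos_of_nat j
  have hcoeff : ∀ v' : Fs L κ₀, v' ∈ S → ‖v'.1 kj‖ ≤ ((n:ℝ)/L) * c := by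
    intro v' hv'
    have h := ebnset_coeff hL hv' kj
    rw [hknj] at h
    rw [hc]
    exact h
  have hpkj : pert j t kj = EuclideanSpace.single 1 (t:ℂ) := if_pos (Or.inl rfl)
  set X0 : ℝ := L * ((κ₀ * (j:ℝ)) * c) with hX0def
  have hX0pos : 0 < X0 := by positivity
  set ρ : ℝ := (1/2 : ℝ) * (X0/(1+X0)) with hρ
  have hρpos : 0 < ρ := by
    have : 0 < X0/(1+X0) := div_pos hX0pos (by linarith)
    rw [hρ]; linarith
  have hsep : ∀ v' : Fs L κ₀, v' ∈ S → ρ ≤ dF L κ₀ w v' := by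
    intro v' hv'S
    have hv'kj := hcoeff v' hv'S
    have hvkj := hcoeff v hvS
    have hgap : c ≤ ‖w.1 kj - v'.1 kj‖ := by
      have h1 : w.1 kj = v.1 kj + pert j t kj := rfl
      have h2 : pert j t kj = (w.1 kj - v'.1 kj) - (v.1 kj - v'.1 kj) := by
        rw [h1]; abel
      have h3 : t ≤ ‖w.1 kj - v'.1 kj‖ + ‖v.1 kj - v'.1 kj‖ := by
        calc t = ‖pert j t kj‖ := by rw [hpkj, norm_pert_single t ht0.le]
          _ ≤ _ := by rw [h2]; exact norm_sub_le _ _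
      have h4 : ‖v.1 kj - v'.1 kj‖ ≤ ‖v.1 kj‖ + ‖v'.1 kj‖ := norm_sub_le _ _
      have h5 : t - ((n:ℝ)/L)*c - ((n:ℝ)/L)*c = c := by rw [ht]; ring
      linarith
    have h5 : X0 ≤ nA L κ₀ (fun k => w.1 k - v'.1 k) 1 := by
      refine le_trans ?_
        (nA_single_ge L κ₀ hL0 hκ.le _ (SummableA.sub' (w.2.2 1) (v'.2.2 1)) kj)
      rw [hX0def, hknj]
      exact mul_le_mul_of_nonneg_left
        (mul_le_mul_of_nonneg_left hgap (by positivity)) hL0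
    have h6 := dF_ge_first L κ₀ w v'
    have h7 := phi_mono hX0pos.le h5
    calc ρ = (1/2 : ℝ) * (X0/(1+X0)) := hρ
      _ ≤ (1/2 : ℝ) * (nA L κ₀ (fun k => w.1 k - v'.1 k) 1 /
            (1 + nA L κ₀ (fun k => w.1 k - v'.1 k) 1)) := by linarith
      _ ≤ dF L κ₀ w v' := h6
  have hw_not : w ∉ closure S := by
    intro hcl
    obtain ⟨v', hv'mem⟩ := mem_closure_iff.mp hcl {y | dF L κ₀ w y < ρ}
      (isOpen_ball L κ₀ w ρ) (by simp only [Set.mem_setOf_eq, dF_self]; exact hρpos)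
    exact absurd hv'mem.1 (not_lt.mpr (hsep v' hv'mem.2))
  exact hw_not hw_in

/-- For every `b > 0`, the set `∪_{m≥1} ∪_{n≥1} E_{b/m, n}` is of
first Baire category (meagre) in the metric space `(F, d)`. -/
theorem union_Ebm_meagre (L κ₀ : ℝ) (hL : 0 < L) (hκ₀ : κ₀ = 2 * Real.pi / L)
    (b : ℝ) (hb : 0 < b) :
    IsMeagre (⋃ (m : ℕ) (_ : 1 ≤ m) (n : ℕ) (_ : 1 ≤ n),
      EbnSet L κ₀ (b / (m : ℝ)) n) := by
  have hκpos : 0 < κ₀ := by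
    rw [hκ₀]
    have := Real.pi_pos
    positivity
  have hbig : IsMeagre (⋃ m : ℕ, ⋃ n : ℕ, EbnSet L κ₀ (b/((m:ℝ)+1)) (n+1)) := by
    apply isMeagre_iUnion
    intro m
    apply isMeagre_iUnion
    intro n
    have hnd := ebn_nowhereDense L κ₀ hL hκpos (b/((m:ℝ)+1))
      (div_pos hb (by positivity)) (n+1)
    rw [isMeagre_iff_countable_union_isNowhereDense]
    exact ⟨{EbnSet L κ₀ (b/((m:ℝ)+1)) (n+1)}, by simpa using hnd,
      Set.countable_singleton _, by simp⟩
  apply hbig.mono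
  intro x hx
  simp only [Set.mem_iUnion] at hx ⊢
  obtain ⟨m, hm, n, hn, hx⟩ := hx
  refine ⟨m-1, n-1, ?_⟩
  have h1 : ((m-1 : ℕ) : ℝ) + 1 = (m:ℝ) := by
    have h := Nat.sub_add_cancel hm
    calc ((m-1:ℕ):ℝ) + 1 = (((m-1)+1 : ℕ) : ℝ) := by push_cast; ring
      _ = (m:ℝ) := by rw [h]
  have h2 : (n-1)+1 = n := Nat.sub_add_cancel hn
  rw [h1, h2]
  exact hx
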